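/- Let A be a random n × N sign matrix such that (i) P{‖A‖ > 3√N} ≤ q, and (ii) there are constants 0 < p < 1, ε > 0, C > 0 with P{‖Ay‖₂ < 6ε√N ‖y‖₂} < C p^n for every fixed y ∈ ℝ^N, and suppose there is a finite set 𝒩 with |𝒩| ≤ e^{ζN} forming an ε-net of δ√N B₁^N, where ζ < ξ log(1/p) and n = ξN. Then with probability at least 1 - q - C e^{ζN} p^n over A, every x ∈ Ker A satisfies ‖x‖₁ ≥ δ√N ‖x‖₂. -/

import Mathlib

open Matrix MeasureTheory

/-- The `ℓ₁` norm on `ℝ^N`. -/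
def l1Norm {N : ℕ} (x : Fin N → ℝ) : ℝ := ∑ i, |x i|

/-- The `ℓ₂` norm on `ℝ^N`. -/
noncomputable def l2Norm {N : ℕ} (x : Fin N → ℝ) : ℝ :=
  Real.sqrt (∑ i, x i ^ 2)

/-- The `ℓ₂ → ℓ₂` operator norm of an `n × N` real matrix. -/
noncomputable def matrixOpNorm {n N : ℕ} (V : Matrix (Fin n) (Fin N) ℝ) : ℝ :=
  ‖LinearMap.toContinuousLinearMap (Matrix.toEuclideanLin V)‖

lemma l2Norm_eq_norm {N : ℕ} (x : Fin N → ℝ) :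
    l2Norm x = ‖(WithLp.equiv 2 (Fin N → ℝ)).symm x‖ := by
  rw [EuclideanSpace.norm_eq]
  simp [l2Norm, Real.norm_eq_abs, sq_abs]

lemma l2Norm_nonneg {N : ℕ} (x : Fin N → ℝ) : 0 ≤ l2Norm x :=
  Real.sqrt_nonneg _

lemma l2Norm_pos {N : ℕ} {x : Fin N → ℝ} (hx : x ≠ 0) : 0 < l2Norm x := by
  rw [l2Norm_eq_norm]
  simp only [norm_pos_iff]
  exact fun h => hx (by simpa using congrArg (WithLp.equiv 2 (Fin N → ℝ)) h)

lemma l2Norm_smul {N : ℕ} (c : ℝ) (x : Fin N → ℝ) :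
    l2Norm (c • x) = |c| * l2Norm x := by
  unfold l2Norm
  rw [← Real.sqrt_sq_eq_abs, ← Real.sqrt_mul (sq_nonneg c), Finset.mul_sum]
  congr 1
  exact Finset.sum_congr rfl fun i _ => by simp [mul_pow]

lemma l1Norm_smul {N : ℕ} (c : ℝ) (x : Fin N → ℝ) :
    l1Norm (c • x) = |c| * l1Norm x := by
  simp [l1Norm, Finset.mul_sum, abs_mul]

lemma opNorm_bound {n N : ℕ} (V : Matrix (Fin n) (Fin N) ℝ) (z : Fin N → ℝ) :
    l2Norm (V.mulVec z) ≤ matrixOpNorm V * l2Norm z := by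
  have h := (LinearMap.toContinuousLinearMap (Matrix.toEuclideanLin V)).le_opNorm
    ((WithLp.equiv 2 (Fin N → ℝ)).symm z)
  rw [l2Norm_eq_norm, l2Norm_eq_norm]
  simpa [matrixOpNorm] using h

lemma l2Norm_lower {N : ℕ} (u y : Fin N → ℝ) :
    l2Norm u - l2Norm (u - y) ≤ l2Norm y := by
  rw [l2Norm_eq_norm, l2Norm_eq_norm, l2Norm_eq_norm]
  have : (WithLp.equiv 2 (Fin N → ℝ)).symm (u - y)
      = (WithLp.equiv 2 (Fin N → ℝ)).symm u - (WithLp.equiv 2 (Fin N → ℝ)).symm y := rfl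
  rw [this]
  have := norm_sub_norm_le ((WithLp.equiv 2 (Fin N → ℝ)).symm u)
    ((WithLp.equiv 2 (Fin N → ℝ)).symm y)
  linarith [le_abs_self (‖(WithLp.equiv 2 (Fin N → ℝ)).symm u‖ - ‖(WithLp.equiv 2 (Fin N → ℝ)).symm y‖)]

lemma det_lemma {n N : ℕ} (hN : 1 ≤ N) {ε δ : ℝ} (hε0 : 0 < ε) (hε : ε < 1/2) (hδ : 0 < δ)
    (V : Matrix (Fin n) (Fin N) ℝ)
    (hop : matrixOpNorm V ≤ 3 * Real.sqrt N)
    (𝒩 : Finset (Fin N → ℝ))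
    (hnet : ∀ x : Fin N → ℝ, l1Norm x ≤ δ * Real.sqrt N → ∃ y ∈ 𝒩, l2Norm (x - y) ≤ ε)
    (hgood : ∀ y ∈ 𝒩, 6 * ε * Real.sqrt N * l2Norm y ≤ l2Norm (V.mulVec y)) :
    ∀ x : Fin N → ℝ, V.mulVec x = 0 → δ * Real.sqrt N * l2Norm x ≤ l1Norm x := by
  intro x hx
  rcases eq_or_ne x 0 with rfl | hx0
  · simp [l1Norm, l2Norm]
  by_contra hcon
  push_neg at hcon
  have hx2 : 0 < l2Norm x := l2Norm_pos hx0
  set c := (l2Norm x)⁻¹ with hc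
  have hc0 : 0 < c := inv_pos.2 hx2
  set u := c • x with hu
  have hu2 : l2Norm u = 1 := by
    rw [hu, l2Norm_smul, abs_of_pos hc0, hc, inv_mul_cancel₀ hx2.ne']
  have hu1 : l1Norm u ≤ δ * Real.sqrt N := by
    rw [hu, l1Norm_smul, abs_of_pos hc0]
    calc c * l1Norm x ≤ c * (δ * Real.sqrt N * l2Norm x) :=
          mul_le_mul_of_nonneg_left hcon.le hc0.le
      _ = δ * Real.sqrt N := by field_simp [hc]; rw [hc, inv_mul_cancel₀ hx2.ne']
  have hVu : V.mulVec u = 0 := by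
    rw [hu, Matrix.mulVec_smul, hx, smul_zero]
  obtain ⟨y, hy𝒩, hyε⟩ := hnet u hu1
  have hsN : 0 < Real.sqrt N := Real.sqrt_pos.2 (by exact_mod_cast Nat.lt_of_lt_of_le Nat.zero_lt_one hN)
  have h1 : l2Norm (V.mulVec y) ≤ 3 * Real.sqrt N * ε := by
    have heq : V.mulVec y = V.mulVec (y - u) := by
      rw [Matrix.mulVec_sub, hVu, sub_zero]
    have hyu : l2Norm (y - u) = l2Norm (u - y) := by
      have : y - u = (-1 : ℝ) • (u - y) := by simp
      rw [this, l2Norm_smul]; simp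
    rw [heq]
    calc l2Norm (V.mulVec (y - u)) ≤ matrixOpNorm V * l2Norm (y - u) := opNorm_bound V _
      _ ≤ 3 * Real.sqrt N * ε := by
          rw [hyu]
          exact mul_le_mul hop hyε (l2Norm_nonneg _) (by positivity)
  have h2 : 1 - ε ≤ l2Norm y := by
    have := l2Norm_lower u y
    linarith [hu2 ▸ this]
  have h3 := hgood y hy𝒩
  nlinarith [mul_pos hε0 hsN]

/-- **Lemma B.** Let `A` be a random `n × N` sign matrix with
(i) `P{‖A‖ > 3√N} ≤ q` and (ii) `P{‖Ay‖₂ < 6ε√N‖y‖₂} < C pⁿ` for every fixed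
`y`, and suppose there is a finite `ε`-net `𝒩` of `δ√N B₁^N` with
`|𝒩| ≤ e^{ζN}`, where `ζ < ξ log(1/p)` and `n = ξN`. Then with probability at
least `1 - q - C e^{ζN} pⁿ`, every `x ∈ Ker A` satisfies
`‖x‖₁ ≥ δ√N ‖x‖₂`. -/
theorem random_kernel_l1_lower_bound
    {Ω : Type*} [MeasurableSpace Ω] (μ : Measure Ω) [IsProbabilityMeasure μ]
    (n N : ℕ) (hN : 1 ≤ N) (ξ p C ε δ ζ q : ℝ)
    (hξ0 : 0 < ξ) (hξ1 : ξ < 1) (hn : (n : ℝ) = ξ * N)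
    (hp0 : 0 < p) (hp1 : p < 1) (hC : 0 < C)
    (hε0 : 0 < ε) (hε : ε < 1/2) (hδ : 0 < δ)
    (hζ : ζ < ξ * Real.log (1 / p))
    (A : Ω → Matrix (Fin n) (Fin N) ℝ)
    (hsign : ∀ ω i j, A ω i j = 1 ∨ A ω i j = -1)
    (hop : (μ {ω | 3 * Real.sqrt N < matrixOpNorm (A ω)}).toReal ≤ q)
    (hy : ∀ y : Fin N → ℝ,
      (μ {ω | l2Norm ((A ω).mulVec y) < 6 * ε * Real.sqrt N * l2Norm y}).toReal
        < C * p ^ n)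
    (𝒩 : Finset (Fin N → ℝ))
    (hcard : (𝒩.card : ℝ) ≤ Real.exp (ζ * N))
    (h𝒩sub : ∀ y ∈ 𝒩, l1Norm y ≤ δ * Real.sqrt N)
    (hnet : ∀ x : Fin N → ℝ, l1Norm x ≤ δ * Real.sqrt N →
      ∃ y ∈ 𝒩, l2Norm (x - y) ≤ ε) :
    1 - q - C * Real.exp (ζ * N) * p ^ n ≤
      (μ {ω | ∀ x : Fin N → ℝ, (A ω).mulVec x = 0 →
        δ * Real.sqrt N * l2Norm x ≤ l1Norm x}).toReal := by
  classical
  set Eop : Set Ω := {ω | 3 * Real.sqrt N < matrixOpNorm (A ω)} with hEopdef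
  set Ey : (Fin N → ℝ) → Set Ω :=
    fun y => {ω | l2Norm ((A ω).mulVec y) < 6 * ε * Real.sqrt N * l2Norm y} with hEydef
  set Bad : Set Ω := Eop ∪ ⋃ y ∈ 𝒩, Ey y with hBaddef
  set Good : Set Ω := {ω | ∀ x : Fin N → ℝ, (A ω).mulVec x = 0 →
        δ * Real.sqrt N * l2Norm x ≤ l1Norm x} with hGooddef
  have hsub : Badᶜ ⊆ Good := by
    intro ω hω
    rw [hBaddef, Set.compl_union] at hω
    obtain ⟨h1, h2⟩ := hω
    have hop' : matrixOpNorm (A ω) ≤ 3 * Real.sqrt N := not_lt.1 h1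
    have hgood : ∀ y ∈ 𝒩, 6 * ε * Real.sqrt N * l2Norm y ≤ l2Norm ((A ω).mulVec y) := by
      intro y hy'
      by_contra hcon
      exact h2 (Set.mem_biUnion hy' (not_le.1 hcon))
    exact det_lemma hN hε0 hε hδ (A ω) hop' 𝒩 hnet hgood
  have hBadle : μ Bad ≤ μ Eop + ∑ y ∈ 𝒩, μ (Ey y) :=
    (measure_union_le _ _).trans (add_le_add le_rfl (measure_biUnion_finset_le 𝒩 Ey))
  have hsumfin : (∑ y ∈ 𝒩, μ (Ey y)) ≠ ⊤ :=
    (ENNReal.sum_lt_top.2 fun y _ => measure_lt_top μ _).ne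
  have h4 : (μ Bad).toReal ≤ q + C * Real.exp (ζ * N) * p ^ n := by
    have hmono := ENNReal.toReal_mono
      (ENNReal.add_ne_top.2 ⟨measure_ne_top μ _, hsumfin⟩) hBadle
    rw [ENNReal.toReal_add (measure_ne_top μ _) hsumfin,
      ENNReal.toReal_sum (fun y _ => measure_ne_top μ _)] at hmono
    have hsum : ∑ y ∈ 𝒩, (μ (Ey y)).toReal ≤ (𝒩.card : ℝ) * (C * p ^ n) := by
      calc ∑ y ∈ 𝒩, (μ (Ey y)).toReal ≤ ∑ _y ∈ 𝒩, (C * p ^ n) :=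
            Finset.sum_le_sum fun y _ => (hy y).le
        _ = (𝒩.card : ℝ) * (C * p ^ n) := by rw [Finset.sum_const, nsmul_eq_mul]
    have hpn : (0:ℝ) ≤ C * p ^ n := by positivity
    have hcard' : (𝒩.card : ℝ) * (C * p ^ n) ≤ Real.exp (ζ * N) * (C * p ^ n) :=
      mul_le_mul_of_nonneg_right hcard hpn
    nlinarith
  have h5 : 1 - (μ Bad).toReal ≤ (μ Badᶜ).toReal := by
    have h1 : (1:ENNReal) ≤ μ Bad + μ Badᶜ := by
      rw [show (1:ENNReal) = μ Set.univ from (measure_univ (μ := μ)).symm,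
        ← Set.union_compl_self Bad]
      exact measure_union_le _ _
    have := ENNReal.toReal_mono
      (ENNReal.add_ne_top.2 ⟨measure_ne_top μ _, measure_ne_top μ _⟩) h1
    rw [ENNReal.toReal_one, ENNReal.toReal_add (measure_ne_top μ _) (measure_ne_top μ _)] at this
    linarith
  have h6 : (μ Badᶜ).toReal ≤ (μ Good).toReal :=
    ENNReal.toReal_mono (measure_ne_top μ _) (measure_mono hsub)
  linarith
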